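/- Let G be a connected graph on n ≥ 3 vertices, let v_0 ≠ v_1 be vertices, and let d ≥ 2n. Then the connectivity graph C_d(v_0, v_1, G) is disconnected if and only if G − v_0 − v_1 is disconnected. Consequently, for such large d, {v_0, v_1} is a d-local 2-separator precisely when it is a (global) 2-separator. -/

import Mathlib

open SimpleGraph

variable {V : Type*}

/-- The ball of diameter `d` around `v`: the subgraph of vertices and edges
lying on closed walks of length at most `d` containing `v`. -/
def ball (G : SimpleGraph V) (v : V) (d : ℕ) : G.Subgraph where
  verts := {u | ∃ W : G.Walk v v, W.length ≤ d ∧ u ∈ W.support}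
  Adj x y := ∃ W : G.Walk v v, W.length ≤ d ∧ s(x, y) ∈ W.edges
  adj_sub := fun ⟨W, _, he⟩ => W.adj_of_mem_edges he
  edge_vert := fun ⟨W, hl, he⟩ => ⟨W, hl, W.fst_mem_support_of_mem_edges he⟩
  symm := ⟨fun x y ⟨W, hl, he⟩ => ⟨W, hl, by rwa [Sym2.eq_swap]⟩⟩

/-- The set N({v₀,v₁}) of neighbours of v₀ or v₁ outside {v₀,v₁}. -/
def nbhd (G : SimpleGraph V) (v0 v1 : V) : Set V :=
  {x | x ≠ v0 ∧ x ≠ v1 ∧ (G.Adj v0 x ∨ G.Adj v1 x)}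

/-- The connectivity graph C_d(v₀,v₁,G): vertices are N({v₀,v₁}), and x,y are
adjacent if there is an x–y path in D_d(vᵢ) − v₀ − v₁ for some i ∈ {0,1}. -/
def connGraph (G : SimpleGraph V) (d : ℕ) (v0 v1 : V) : SimpleGraph V where
  Adj x y := x ≠ y ∧ x ∈ nbhd G v0 v1 ∧ y ∈ nbhd G v0 v1 ∧
    (((_root_.ball G v0 d).deleteVerts {v0, v1}).spanningCoe.Reachable x y ∨
     ((_root_.ball G v1 d).deleteVerts {v0, v1}).spanningCoe.Reachable x y)
  symm := ⟨fun x y ⟨hxy, hx, hy, hr⟩ =>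
    ⟨hxy.symm, hy, hx, hr.imp SimpleGraph.Reachable.symm SimpleGraph.Reachable.symm⟩⟩
  loopless := ⟨fun x h => h.1 rfl⟩

lemma auxBallTop [Fintype V] {G : SimpleGraph V} (hG : G.Connected) (v : V) {d : ℕ}
    (hd : 2 * Fintype.card V ≤ d) : _root_.ball G v d = ⊤ := by
  have key : ∀ u : V, ∃ p : G.Walk v u, p.length + 1 ≤ Fintype.card V := by
    classical
    intro u
    obtain ⟨p⟩ := hG.preconnected v u
    exact ⟨p.toPath, Nat.succ_le_of_lt p.toPath.2.length_lt⟩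
  apply SimpleGraph.Subgraph.ext
  · ext u
    simp only [Subgraph.verts_top, Set.mem_univ, iff_true, _root_.ball, Set.mem_setOf_eq]
    obtain ⟨p, hp⟩ := key u
    refine ⟨p.append p.reverse, ?_, ?_⟩
    · rw [Walk.length_append, Walk.length_reverse]; omega
    · exact (Walk.mem_support_append_iff _ _).mpr (Or.inl p.end_mem_support)
  · funext x y
    simp only [_root_.ball, Subgraph.top_adj, eq_iff_iff]
    constructor
    · rintro ⟨W, _, he⟩; exact W.adj_of_mem_edges he
    · intro h
      obtain ⟨p, hp⟩ := key x
      obtain ⟨q, hq⟩ := key y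
      refine ⟨p.append (Walk.cons h q.reverse), ?_, ?_⟩
      · rw [Walk.length_append, Walk.length_cons, Walk.length_reverse]; omega
      · rw [Walk.edges_append, List.mem_append]
        exact Or.inr (by rw [Walk.edges_cons]; exact List.mem_cons_self)

/-- A walk in the spanning coercion between vertices of the subgraph lifts to the coercion. -/
lemma auxSpanToCoe {G : SimpleGraph V} {K : G.Subgraph} {x y : V}
    (W : K.spanningCoe.Walk x y) (hx : x ∈ K.verts) (hy : y ∈ K.verts) :
    K.coe.Reachable ⟨x, hx⟩ ⟨y, hy⟩ := by
  induction W with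
  | nil => exact Reachable.refl _
  | @cons a b c h p ih =>
    have hb : b ∈ K.verts := K.edge_vert (K.symm.symm _ _ h)
    exact (Adj.reachable (show K.coe.Adj ⟨a, hx⟩ ⟨b, hb⟩ from h)).trans (ih hb hy)

lemma auxCoeToSpan {G : SimpleGraph V} {K : G.Subgraph} {x y : K.verts}
    (h : K.coe.Reachable x y) : K.spanningCoe.Reachable x.val y.val :=
  h.map ⟨Subtype.val, fun a => a⟩

/-- Reachability transfers along a vertex map turning adjacency into reachability. -/
lemma auxReachTrans {W' : Type*} {G' : SimpleGraph V} {H' : SimpleGraph W'} (f : V → W')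
    (hf : ∀ a b, G'.Adj a b → H'.Reachable (f a) (f b)) {x y : V}
    (h : G'.Reachable x y) : H'.Reachable (f x) (f y) := by
  obtain ⟨W⟩ := h
  induction W with
  | nil => exact Reachable.refl _
  | cons ha p ih => exact (hf _ _ ha).trans ih

/-- Every vertex outside {v0,v1} reaches, within G − v0 − v1, some neighbour of v0 or v1. -/
lemma auxToN {G : SimpleGraph V} {v0 v1 : V} :
    ∀ {x u : V}, (G.Walk x u) → (u = v0 ∨ u = v1) → x ≠ v0 → x ≠ v1 →
      ∃ z ∈ nbhd G v0 v1,
        ((⊤ : G.Subgraph).deleteVerts {v0, v1}).spanningCoe.Reachable x z := by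
  intro x u W
  induction W with
  | nil =>
    rintro (rfl | rfl) h0 h1
    · exact absurd rfl h0
    · exact absurd rfl h1
  | @cons a b c h p ih =>
    intro hu ha0 ha1
    by_cases hb0 : b = v0
    · exact ⟨a, ⟨ha0, ha1, Or.inl (by rw [← hb0]; exact h.symm)⟩, Reachable.refl a⟩
    by_cases hb1 : b = v1
    · exact ⟨a, ⟨ha0, ha1, Or.inr (by rw [← hb1]; exact h.symm)⟩, Reachable.refl a⟩
    obtain ⟨z, hz, hr⟩ := ih hu hb0 hb1
    have hadj : ((⊤ : G.Subgraph).deleteVerts {v0, v1}).spanningCoe.Adj a b := by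
      simp only [Subgraph.spanningCoe_adj, Subgraph.deleteVerts_adj, Subgraph.verts_top,
        Set.mem_univ, Set.mem_insert_iff, Set.mem_singleton_iff, Subgraph.top_adj, true_and,
        not_or]
      exact ⟨⟨ha0, ha1⟩, ⟨hb0, hb1⟩, h⟩
    exact ⟨z, hz, hadj.reachable.trans hr⟩

/-- For a connected graph on n ≥ 3 vertices and d ≥ 2n, the connectivity graph
C_d(v₀,v₁,G) is disconnected iff G − v₀ − v₁ is disconnected; i.e. for such large d,
{v₀,v₁} is a d-local 2-separator precisely when it is a global 2-separator. -/
theorem stmt15 [Fintype V] (G : SimpleGraph V) (hG : G.Connected)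
    (hn : 3 ≤ Fintype.card V) (v0 v1 : V) (hne : v0 ≠ v1) (d : ℕ)
    (hd : 2 * Fintype.card V ≤ d) :
    (¬ ((connGraph G d v0 v1).induce (nbhd G v0 v1)).Connected ↔
     ¬ (G.induce {x : V | x ≠ v0 ∧ x ≠ v1}).Connected) := by
  classical
  set K : G.Subgraph := (⊤ : G.Subgraph).deleteVerts {v0, v1} with hKdef
  set N : Set V := nbhd G v0 v1 with hNdef
  -- connGraph adjacency, simplified
  have hCadj : ∀ x y : V, (connGraph G d v0 v1).Adj x y ↔
      (x ≠ y ∧ x ∈ N ∧ y ∈ N ∧ K.spanningCoe.Reachable x y) := by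
    intro x y
    simp only [connGraph, auxBallTop hG v0 hd, auxBallTop hG v1 hd, or_self, hNdef, hKdef]
  -- membership in K.verts
  have hNK : ∀ {z : V}, z ∈ N → z ∈ K.verts := by
    rintro z ⟨hz0, hz1, -⟩
    exact ⟨Set.mem_univ z, by simp [hz0, hz1]⟩
  have hSK : ∀ {z : V}, z ≠ v0 → z ≠ v1 → z ∈ K.verts := by
    intro z h0 h1
    exact ⟨Set.mem_univ z, by simp [h0, h1]⟩
  -- each vertex of K reaches N
  have hreachN : ∀ {x : V}, x ≠ v0 → x ≠ v1 →
      ∃ z ∈ N, K.spanningCoe.Reachable x z := by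
    intro x h0 h1
    obtain ⟨W⟩ := hG.preconnected x v0
    exact auxToN W (Or.inl rfl) h0 h1
  -- existence of a vertex outside {v0, v1}
  have hex : ∃ x : V, x ≠ v0 ∧ x ≠ v1 := by
    by_contra h
    push_neg at h
    have hsub : (Finset.univ : Finset V) ⊆ {v0, v1} := by
      intro x _
      rcases eq_or_ne x v0 with rfl | h0
      · simp
      · simp [h x h0]
    have := Finset.card_le_card hsub
    have h2 : ({v0, v1} : Finset V).card ≤ 2 := Finset.card_insert_le _ _ |>.trans (by simp)
    simp only [Finset.card_univ] at this
    omega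
  have hNne : N.Nonempty := by
    obtain ⟨x, h0, h1⟩ := hex
    obtain ⟨z, hz, -⟩ := hreachN h0 h1
    exact ⟨z, hz⟩
  -- the right-hand side equals connectivity of K
  have hRHS : (G.induce {x : V | x ≠ v0 ∧ x ≠ v1}).Connected ↔ K.Connected := by
    have hset : ({x : V | x ≠ v0 ∧ x ≠ v1} : Set V) = Set.univ \ {v0, v1} := by
      ext x; simp [not_or]
    rw [connected_induce_iff, hset, hKdef]
    rfl
  rw [not_iff_not, hRHS]
  constructor
  · -- connGraph side connected → K connected
    intro hC
    rw [Subgraph.connected_iff]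
    constructor
    · constructor
      rintro ⟨x, hx⟩ ⟨y, hy⟩
      have hx0 : x ∉ ({v0, v1} : Set V) := hx.2
      have hy0 : y ∉ ({v0, v1} : Set V) := hy.2
      simp only [Set.mem_insert_iff, Set.mem_singleton_iff, not_or] at hx0 hy0
      obtain ⟨zx, hzx, hrx⟩ := hreachN hx0.1 hx0.2
      obtain ⟨zy, hzy, hry⟩ := hreachN hy0.1 hy0.2
      have hzz : K.spanningCoe.Reachable zx zy := by
        have := hC.preconnected ⟨zx, hzx⟩ ⟨zy, hzy⟩
        refine auxReachTrans (fun a : N => (a : V)) ?_ this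
        rintro a b hab
        have : (connGraph G d v0 v1).Adj a.val b.val := hab
        exact ((hCadj a.val b.val).mp this).2.2.2
      obtain ⟨W⟩ := (hrx.trans hzz).trans hry.symm
      exact auxSpanToCoe W _ _
    · obtain ⟨x, h0, h1⟩ := hex
      exact ⟨x, hSK h0 h1⟩
  · -- K connected → connGraph side connected
    intro hK
    obtain ⟨z, hz⟩ := hNne
    rw [connected_iff_exists_forall_reachable]
    refine ⟨⟨z, hz⟩, ?_⟩
    rintro ⟨w, hw⟩
    rcases eq_or_ne z w with rfl | hzw
    · rfl
    have hreach : K.spanningCoe.Reachable z w :=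
      auxCoeToSpan (hK.preconnected ⟨z, hNK hz⟩ ⟨w, hNK hw⟩)
    have hadj : (connGraph G d v0 v1).Adj z w :=
      (hCadj z w).mpr ⟨hzw, hz, hw, hreach⟩
    exact Adj.reachable (by exact hadj)
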